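/- Fix T0 ∈ ℝ. Let q : ℝ → ℝ be antitone with q(t) > 0 for all t, let P : ℝ → ℝ be continuous with P(t) > 0 for all t, and let N : ℝ → ℝ be nondecreasing with N(T) ≥ 0 for all T. For T > T0 define s(T) := N(T)/∫_{T0}^T P(t)·q(t) dt. Suppose I : ℝ → ℝ is continuous and satisfies I(T)·∫_{T0}^T P(t) dt = P(T0) − P(T) for all T ≥ T0. Then the function T ↦ (∫_{T0}^T exp(−∫_U^T I(V) dV) dU)·s(T) is nondecreasing on (T0, ∞). -/

import Mathlib

open MeasureTheory

/-- No-arbitrage condition purely in terms of CDS and IRS rates: with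
`Φ(U,T) = exp(−∫_U^T I)` built from the forward IRS rate `I` (related to bond prices by
`I(T)·∫_{T0}^T P = P(T0) − P(T)`), the function `T ↦ (∫_{T0}^T Φ(U,T) dU)·s(T)` is
nondecreasing on `(T0,∞)`. -/
theorem stmt_17
    (T0 : ℝ) (q P N : ℝ → ℝ)
    (hq : Antitone q) (hq0 : ∀ t, 0 < q t)
    (hP : Continuous P) (hP0 : ∀ t, 0 < P t)
    (hN : Monotone N) (hN0 : ∀ T, 0 ≤ N T)
    (s : ℝ → ℝ) (hs : ∀ T, T0 < T → s T = N T / ∫ t in T0..T, P t * q t)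
    (I : ℝ → ℝ) (hI : Continuous I)
    (hIP : ∀ T, T0 ≤ T → I T * (∫ t in T0..T, P t) = P T0 - P T) :
    MonotoneOn (fun T => (∫ U in T0..T, Real.exp (-∫ V in U..T, I V)) * s T)
      (Set.Ioi T0) := by
  set A : ℝ → ℝ := fun T => ∫ t in T0..T, P t with hAdef
  set B : ℝ → ℝ := fun T => ∫ t in T0..T, P t * q t with hBdef
  set E : ℝ → ℝ := fun U => Real.exp (∫ V in T0..U, I V) with hEdef
  have hIint : ∀ a b : ℝ, IntervalIntegrable I volume a b :=
    fun a b => hI.intervalIntegrable a b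
  have hPint : ∀ a b : ℝ, IntervalIntegrable P volume a b :=
    fun a b => hP.intervalIntegrable a b
  have hPqint : ∀ a b : ℝ, IntervalIntegrable (fun t => P t * q t) volume a b :=
    fun a b => (hq.intervalIntegrable).continuousOn_mul hP.continuousOn
  have hEpos : ∀ U, 0 < E U := fun U => Real.exp_pos _
  have hEcont : Continuous E :=
    Real.continuous_exp.comp (intervalIntegral.continuous_primitive hIint T0)
  have hEderiv : ∀ x : ℝ, HasDerivAt E (I x * E x) x := by
    intro x
    have h1 : HasDerivAt (fun u => ∫ V in T0..u, I V) (I x) x :=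
      intervalIntegral.integral_hasDerivAt_right (hIint T0 x)
        (hI.stronglyMeasurableAtFilter _ _) hI.continuousAt
    have := (Real.hasDerivAt_exp (∫ V in T0..x, I V)).comp x h1
    simpa [hEdef, mul_comm, Function.comp_def] using this
  have hAderiv : ∀ x : ℝ, HasDerivAt A (P x) x := by
    intro x
    exact intervalIntegral.integral_hasDerivAt_right (hPint T0 x)
      (hP.stronglyMeasurableAtFilter _ _) hP.continuousAt
  have hIEderiv : ∀ x : ℝ, HasDerivAt (fun T => ∫ U in T0..T, E U) (E x) x := by
    intro x
    exact intervalIntegral.integral_hasDerivAt_right (hEcont.intervalIntegrable _ _)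
      (hEcont.stronglyMeasurableAtFilter _ _) hEcont.continuousAt
  -- the function g is constant 0 on [T0, ∞)
  set g : ℝ → ℝ := fun T => (∫ U in T0..T, E U) * P T0 - A T * E T with hgdef
  have hg0 : ∀ T, T0 ≤ T → g T = 0 := by
    intro T hT
    have hgd : ∀ x ∈ Set.Ico T0 T, HasDerivWithinAt g 0 (Set.Ici x) x := by
      intro x hx
      have hd : HasDerivAt g (E x * P T0 - (P x * E x + A x * (I x * E x))) x :=
        ((hIEderiv x).mul_const (P T0)).sub ((hAderiv x).mul (hEderiv x))
      have hz : E x * P T0 - (P x * E x + A x * (I x * E x)) = 0 := by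
        have h := hIP x hx.1
        have h2 : I x * A x = P T0 - P x := h
        linear_combination (-(E x)) * h2
      rw [hz] at hd
      exact hd.hasDerivWithinAt
    have hgc : ContinuousOn g (Set.Icc T0 T) := by
      have : Continuous g := by
        have h1 : Continuous fun T => ∫ U in T0..T, E U :=
          intervalIntegral.continuous_primitive (fun a b => hEcont.intervalIntegrable a b) T0
        have h2 : Continuous A := intervalIntegral.continuous_primitive hPint T0
        exact (h1.mul continuous_const).sub (h2.mul hEcont)
      exact this.continuousOn
    have := constant_of_has_deriv_right_zero hgc hgd T ⟨hT, le_refl T⟩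
    simpa [hgdef, hAdef] using this
  -- key identity
  have hkey : ∀ T, T0 ≤ T →
      (∫ U in T0..T, Real.exp (-∫ V in U..T, I V)) = A T / P T0 := by
    intro T hT
    have hsum : ∀ U : ℝ, (-∫ V in U..T, I V) = (∫ V in T0..U, I V) + (-∫ V in T0..T, I V) := by
      intro U
      have := intervalIntegral.integral_add_adjacent_intervals (hIint T0 U) (hIint U T)
      linarith
    have h1 : (∫ U in T0..T, Real.exp (-∫ V in U..T, I V))
        = ∫ U in T0..T, E U * Real.exp (-∫ V in T0..T, I V) := by
      apply intervalIntegral.integral_congr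
      intro U _
      show Real.exp (-∫ V in U..T, I V) = E U * Real.exp (-∫ V in T0..T, I V)
      rw [hsum U, Real.exp_add]
    rw [h1, intervalIntegral.integral_mul_const]
    have h2 : (∫ U in T0..T, E U) = A T * E T / P T0 := by
      have := hg0 T hT
      have hp := (hP0 T0).ne'
      simp only [hgdef] at this
      rw [eq_div_iff hp]
      linarith
    rw [h2]
    have hET : E T * Real.exp (-∫ V in T0..T, I V) = 1 := by
      rw [hEdef]
      simp [← Real.exp_add]
    rw [div_mul_eq_mul_div, mul_assoc, hET, mul_one]
  -- positivity facts
  have hA_pos : ∀ T, T0 < T → 0 < A T := by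
    intro T hT
    exact intervalIntegral.intervalIntegral_pos_of_pos_on (hPint T0 T)
      (fun x _ => hP0 x) hT
  have hqA : ∀ T, T0 < T → q T * A T ≤ B T := by
    intro T hT
    have : (∫ t in T0..T, q T * P t) ≤ ∫ t in T0..T, P t * q t := by
      apply intervalIntegral.integral_mono_on hT.le
        ((hPint T0 T).const_mul (q T)) (hPqint T0 T)
      intro x hx
      have : q T ≤ q x := hq hx.2
      nlinarith [hP0 x]
    rwa [intervalIntegral.integral_const_mul] at this
  have hB_pos : ∀ T, T0 < T → 0 < B T := by
    intro T hT
    have := hqA T hT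
    nlinarith [hq0 T, hA_pos T hT]
  -- monotonicity
  intro a ha b hb hab
  simp only [Set.mem_Ioi] at ha hb
  simp only
  rw [hs a ha, hs b hb, hkey a ha.le, hkey b hb.le]
  set C : ℝ := ∫ t in a..b, P t * q t with hCdef
  set D : ℝ := ∫ t in a..b, P t with hDdef
  have hBsplit : B b = B a + C :=
    (intervalIntegral.integral_add_adjacent_intervals (hPqint T0 a) (hPqint a b)).symm
  have hAsplit : A b = A a + D :=
    (intervalIntegral.integral_add_adjacent_intervals (hPint T0 a) (hPint a b)).symm
  have hD0 : 0 ≤ D := by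
    apply intervalIntegral.integral_nonneg hab
    intro x _; exact (hP0 x).le
  have hC0 : 0 ≤ C := by
    apply intervalIntegral.integral_nonneg hab
    intro x _; exact (mul_pos (hP0 x) (hq0 x)).le
  have hCqD : C ≤ q a * D := by
    have : (∫ t in a..b, P t * q t) ≤ ∫ t in a..b, q a * P t := by
      apply intervalIntegral.integral_mono_on hab (hPqint a b)
        ((hPint a b).const_mul (q a))
      intro x hx
      have : q x ≤ q a := hq hx.1
      nlinarith [hP0 x]
    rwa [intervalIntegral.integral_const_mul] at this
  have hkeyineq : A a * B b ≤ A b * B a := by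
    rw [hBsplit, hAsplit]
    have h1 : A a * C ≤ A a * (q a * D) :=
      mul_le_mul_of_nonneg_left hCqD (hA_pos a ha).le
    have h2 : (q a * A a) * D ≤ B a * D :=
      mul_le_mul_of_nonneg_right (hqA a ha) hD0
    nlinarith
  have hBa := hB_pos a ha
  have hBb := hB_pos b hb
  have hAa := hA_pos a ha
  have hAb := hA_pos b hb
  have hPT0 := hP0 T0
  rw [div_mul_div_comm, div_mul_div_comm, div_le_div_iff₀ (by positivity) (by positivity)]
  have hNab : N a ≤ N b := hN hab
  nlinarith [hN0 a, hN0 b, mul_le_mul_of_nonneg_left hkeyineq (mul_nonneg (hN0 b) hPT0.le),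
    mul_le_mul_of_nonneg_right hNab (by positivity : (0:ℝ) ≤ A a * (P T0 * B b))]
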